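/- Let G be a finite simple graph and let I be an independent set in G such that every vertex v of I is simplicial (its neighborhood is a clique) and has degree exactly two. Then G has a minimum dominating set S (a dominating set of minimum cardinality) with S ∩ I = ∅. -/

import Mathlib

/-- `S` is a dominating set of `G`: every vertex is in `S` or adjacent to a vertex of `S`. -/
def IsDominatingSet {V : Type*} (G : SimpleGraph V) (S : Finset V) : Prop :=
  ∀ v : V, ∃ u ∈ S, u = v ∨ G.Adj u v

private lemma measure_lt (N cA cB iA iB : ℕ) (hiA : iA ≤ N)
    (h : cA < cB ∨ (cA = cB ∧ iA < iB)) :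
    cA * (N + 1) + iA < cB * (N + 1) + iB := by
  rcases h with h | ⟨h, h2⟩
  · have h1 : (cA + 1) * (N + 1) ≤ cB * (N + 1) := Nat.mul_le_mul_right _ h
    nlinarith
  · subst h; omega

private lemma measure_card_le (N cA cB iA iB : ℕ) (hiB : iB ≤ N)
    (h : cA * (N + 1) + iA ≤ cB * (N + 1) + iB) : cA ≤ cB := by
  by_contra hc
  push_neg at hc
  have h1 : (cB + 1) * (N + 1) ≤ cA * (N + 1) := Nat.mul_le_mul_right _ hc
  nlinarith

/-- If `I` is an independent set of simplicial degree-two vertices in a finite graph `G`,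
then `G` has a minimum dominating set containing no vertex of `I`. -/
theorem independent_simplicial_degree_two_avoidable
    {V : Type*} [Fintype V] [DecidableEq V]
    (G : SimpleGraph V) [DecidableRel G.Adj] (I : Set V)
    (hIndep : ∀ u ∈ I, ∀ v ∈ I, ¬ G.Adj u v)
    (hSimp : ∀ v ∈ I, G.IsClique (G.neighborSet v))
    (hDeg : ∀ v ∈ I, G.degree v = 2) :
    ∃ S : Finset V, IsDominatingSet G S ∧
      (∀ T : Finset V, IsDominatingSet G T → S.card ≤ T.card) ∧
      ∀ v ∈ I, v ∉ S := by
  classical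
  set N := Fintype.card V with hN
  let i : Finset V → ℕ := fun S => (S.filter (fun x => x ∈ I)).card
  let m : Finset V → ℕ := fun S => S.card * (N + 1) + i S
  have hile : ∀ S : Finset V, i S ≤ N := by
    intro S
    exact le_trans (Finset.card_le_card (Finset.filter_subset _ _))
      (Finset.card_le_univ S)
  have huniv : IsDominatingSet G Finset.univ := fun v => ⟨v, Finset.mem_univ v, Or.inl rfl⟩
  obtain ⟨S, hSmem, hSmin⟩ := Finset.exists_min_image
      (Finset.univ.filter (fun S => IsDominatingSet G S)) m
      ⟨Finset.univ, by simp [huniv]⟩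
  have hSdom : IsDominatingSet G S := (Finset.mem_filter.mp hSmem).2
  have hSmin' : ∀ T : Finset V, IsDominatingSet G T → m S ≤ m T := by
    intro T hT
    exact hSmin T (by simp [hT])
  -- S avoids I
  have havoid : ∀ v ∈ I, v ∉ S := by
    intro v hvI hvS
    -- get a neighbor a of v
    have hdeg : (G.neighborFinset v).card = 2 := hDeg v hvI
    have hne : (G.neighborFinset v).Nonempty := by
      rw [← Finset.card_pos, hdeg]; norm_num
    obtain ⟨a, ha⟩ := hne
    have hav : G.Adj v a := (SimpleGraph.mem_neighborFinset G v a).mp ha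
    have haneqv : a ≠ v := fun h => G.irrefl (h ▸ hav)
    have haI : a ∉ I := fun haI => hIndep v hvI a haI hav
    set S' := insert a (S.erase v) with hS'
    have hS'dom : IsDominatingSet G S' := by
      intro w
      obtain ⟨u, hu, hcase⟩ := hSdom w
      by_cases huv : u = v
      · subst huv
        rcases hcase with rfl | hadj
        · exact ⟨a, Finset.mem_insert_self _ _, Or.inr hav.symm⟩
        · by_cases hwa : w = a
          · exact ⟨a, Finset.mem_insert_self _ _, Or.inl hwa.symm⟩
          · have hwn : w ∈ G.neighborSet u := hadj
            have han : a ∈ G.neighborSet u := hav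
            have : G.Adj a w := hSimp u hvI han hwn (fun h => hwa h.symm)
            exact ⟨a, Finset.mem_insert_self _ _, Or.inr this⟩
      · exact ⟨u, Finset.mem_insert.mpr (Or.inr (Finset.mem_erase.mpr ⟨huv, hu⟩)),
          hcase⟩
    have hcard : S'.card ≤ S.card := by
      have h1 : S'.card ≤ (S.erase v).card + 1 := Finset.card_insert_le _ _
      have h2 : (S.erase v).card = S.card - 1 := Finset.card_erase_of_mem hvS
      have h3 : 1 ≤ S.card := Finset.card_pos.mpr ⟨v, hvS⟩
      omega
    have hi : i S' < i S := by
      have hsub : S'.filter (fun x => x ∈ I) ⊆ (S.filter (fun x => x ∈ I)).erase v := by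
        intro x hx
        rw [Finset.mem_filter] at hx
        obtain ⟨hx1, hx2⟩ := hx
        rcases Finset.mem_insert.mp hx1 with rfl | hx1
        · exact absurd hx2 haI
        · rw [Finset.mem_erase] at hx1
          exact Finset.mem_erase.mpr ⟨hx1.1, Finset.mem_filter.mpr ⟨hx1.2, hx2⟩⟩
      have hvmem : v ∈ S.filter (fun x => x ∈ I) := Finset.mem_filter.mpr ⟨hvS, hvI⟩
      calc i S' ≤ ((S.filter (fun x => x ∈ I)).erase v).card :=
            Finset.card_le_card hsub
        _ < i S := Finset.card_erase_lt_of_mem hvmem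
    have hlt : m S' < m S := by
      apply measure_lt N S'.card S.card (i S') (i S) (hile S')
      rcases lt_or_eq_of_le hcard with h | h
      · exact Or.inl h
      · exact Or.inr ⟨h, hi⟩
    exact absurd (hSmin' S' hS'dom) (not_le.mpr hlt)
  refine ⟨S, hSdom, ?_, havoid⟩
  intro T hT
  exact measure_card_le N S.card T.card (i S) (i T) (hile T) (hSmin' T hT)
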